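/- Suppose A is commutative and M is A-symmetric (am = ma for all a ∈ A, m ∈ M). Then ∂₁ = 0, so H₁((A,B,ε);M) = (M⊗A)/im ∂₂, and there is a k-module isomorphism H₁((A,B,ε);M) ≅ M⊗_A Ω¹_{A/B}, where A is regarded as a B-algebra via ε and Ω¹_{A/B} denotes the module of Kähler differentials; the isomorphism sends the class of m⊗a to m⊗_A d(a), with inverse sending m⊗_A a·d(b) to the class of ma⊗b. -/

import Mathlib

/-!
STATEMENT 6: Suppose A is commutative and M is A-symmetric.  Then ∂₁ = 0, so
H₁((A,B,ε);M) = (M⊗A)/im ∂₂, and there is a k-module isomorphism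
H₁((A,B,ε);M) ≅ M ⊗_A Ω¹_{A/B}, where A is regarded as a B-algebra via ε; the
isomorphism sends the class of m⊗a to m ⊗_A d(a), with inverse sending
m ⊗_A a·d(b) to the class of ma⊗b.

Here (A,B,ε) is a commutative triple over a commutative ring k: the B-algebra
structure of A given via ε is encoded by `[Algebra B A]` together with
`[IsScalarTower k B A]` (saying that ε = algebraMap B A is a k-algebra map); its
image is automatically central and M is automatically B-symmetric since A is
commutative and M is A-symmetric (`IsCentralScalar A M`).
-/

open TensorProduct MulOpposite

set_option maxSynthPendingDepth 8

set_option maxSynthPendingDepth 8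

section Aux

variable {k : Type*} [CommRing k]
    {B : Type*} [CommRing B] [Algebra k B]
    {A : Type*} [CommRing A] [Algebra k A] [Algebra B A] [IsScalarTower k B A]
    {M : Type*} [AddCommGroup M] [Module k M]
    [Module A M] [Module Aᵐᵒᵖ M] [IsCentralScalar A M]
    [IsScalarTower k A M] [SMulCommClass A k M]

local instance : SMulCommClass k A M := SMulCommClass.symm A k M

variable (B) in
noncomputable def SHf : M ⊗[k] A →ₗ[k] M ⊗[A] Ω[A⁄B] :=
  TensorProduct.lift (LinearMap.mk₂ k (fun m a => m ⊗ₜ[A] KaehlerDifferential.D B A a)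
    (fun m₁ m₂ a => add_tmul m₁ m₂ _)
    (fun c m a => (smul_tmul' c m _).symm)
    (fun m a₁ a₂ => by rw [map_add, tmul_add])
    (fun c m a => by
      have h : (KaehlerDifferential.D B A) (c • a) = algebraMap k A c • KaehlerDifferential.D B A a := by
        rw [Algebra.smul_def, Derivation.leibniz, IsScalarTower.algebraMap_apply k B A,
          Derivation.map_algebraMap, smul_zero, add_zero]
      rw [h, tmul_smul, algebraMap_smul]))

@[simp] lemma SHf_tmul (m : M) (a : A) :
    SHf (k:=k) B (M:=M) (m ⊗ₜ[k] a) = m ⊗ₜ[A] KaehlerDifferential.D B A a := rfl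


set_option linter.unusedSectionVars false

variable (p2 : M ⊗[k] A ⊗[k] A ⊗[k] B →ₗ[k] M ⊗[k] A)
variable (hp2 : ∀ (m : M) (a b : A) (α : B),
      p2 (m ⊗ₜ[k] a ⊗ₜ[k] b ⊗ₜ[k] α) =
        (op (a * algebraMap B A α) • m) ⊗ₜ[k] b
        - m ⊗ₜ[k] (a * algebraMap B A α * b)
        + ((b * algebraMap B A α) • m) ⊗ₜ[k] a)

include hp2

lemma SHp2_smul (a : A) (y : M ⊗[k] A ⊗[k] A ⊗[k] B) : p2 (a • y) = a • p2 y := by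
  have h : p2 ∘ₗ DistribSMul.toLinearMap k (M ⊗[k] A ⊗[k] A ⊗[k] B) a
      = DistribSMul.toLinearMap k (M ⊗[k] A) a ∘ₗ p2 := by
    ext m a' b α
    simp only [LinearMap.coe_comp, Function.comp_apply, DistribSMul.toLinearMap_apply,
      TensorProduct.AlgebraTensorModule.curry_apply, TensorProduct.curry_apply,
      LinearMap.coe_restrictScalars]
    rw [smul_tmul', smul_tmul', smul_tmul', hp2, hp2, op_smul_eq_smul, op_smul_eq_smul, smul_add, smul_sub,
      smul_tmul', smul_tmul', smul_tmul', smul_smul, smul_smul, smul_smul, smul_smul,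
      mul_comm a]
    rw [mul_comm (b * algebraMap B A α) a]
  exact LinearMap.congr_fun h y

lemma SHf_p2 (y : M ⊗[k] A ⊗[k] A ⊗[k] B) : SHf (k:=k) B (M:=M) (p2 y) = 0 := by
  have h : (SHf (k:=k) B (M:=M)) ∘ₗ p2 = 0 := by
    ext m a b α
    simp only [LinearMap.coe_comp, Function.comp_apply,
      TensorProduct.AlgebraTensorModule.curry_apply, TensorProduct.curry_apply,
      LinearMap.coe_restrictScalars, LinearMap.zero_apply]
    rw [hp2, map_add, map_sub, SHf_tmul, SHf_tmul, SHf_tmul]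
    have hD : KaehlerDifferential.D B A (a * algebraMap B A α * b)
        = (a * algebraMap B A α) • KaehlerDifferential.D B A b
          + (b * algebraMap B A α) • KaehlerDifferential.D B A a := by
      rw [Derivation.leibniz, Derivation.leibniz, Derivation.map_algebraMap,
        smul_zero, zero_add, smul_smul, mul_comm b]
    rw [hD, tmul_add, tmul_smul, tmul_smul, op_smul_eq_smul, smul_tmul', smul_tmul']
    abel
  exact LinearMap.congr_fun h y

variable (B) in
noncomputable def SHN : Submodule A (M ⊗[k] A) where
  carrier := LinearMap.range p2
  add_mem' h1 h2 := add_mem h1 h2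
  zero_mem' := zero_mem _
  smul_mem' a x hx := by
    obtain ⟨y, rfl⟩ := hx
    exact ⟨a • y, SHp2_smul p2 hp2 a y⟩


noncomputable local instance SHmodB : Module B ((M ⊗[k] A) ⧸ SHN B p2 hp2) :=
  Module.compHom _ (algebraMap B A)
local instance : IsScalarTower B A ((M ⊗[k] A) ⧸ SHN B p2 hp2) :=
  IsScalarTower.of_algebraMap_smul fun _ _ => rfl
local instance : SMulCommClass A B ((M ⊗[k] A) ⧸ SHN B p2 hp2) :=
  ⟨fun a b q => by
    show a • (algebraMap B A b) • q = (algebraMap B A b) • a • q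
    rw [smul_comm]⟩

variable (B) in
noncomputable def SHmk : M ⊗[k] A →ₗ[A] ((M ⊗[k] A) ⧸ SHN B p2 hp2) := (SHN B p2 hp2).mkQ

lemma SHmk_apply (x : M ⊗[k] A) :
    SHmk B p2 hp2 x = Submodule.Quotient.mk (p := SHN B p2 hp2) x := rfl

variable (B) in
noncomputable def SHδ : Derivation B A (M →ₗ[A] ((M ⊗[k] A) ⧸ SHN B p2 hp2)) where
  toFun b :=
    { toFun := fun m => SHmk B p2 hp2 (m ⊗ₜ[k] b)
      map_add' := fun m₁ m₂ => by simp only [add_tmul, map_add]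
      map_smul' := fun a m => by
        simp only [RingHom.id_apply, ← smul_tmul', map_smul] }
  map_add' b₁ b₂ := LinearMap.ext fun m => by
    simp only [LinearMap.coe_mk, AddHom.coe_mk, LinearMap.add_apply]
    rw [tmul_add, map_add]
  map_smul' α b := LinearMap.ext fun m => by
    simp only [RingHom.id_apply, LinearMap.coe_mk, AddHom.coe_mk, LinearMap.smul_apply]
    show SHmk B p2 hp2 (m ⊗ₜ[k] (α • b)) = algebraMap B A α • SHmk B p2 hp2 (m ⊗ₜ[k] b)
    rw [← map_smul, smul_tmul', Algebra.smul_def, SHmk_apply, SHmk_apply,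
      Submodule.Quotient.eq]
    refine ⟨((b * algebraMap B A α) • m) ⊗ₜ[k] (1:A) ⊗ₜ[k] (1:A) ⊗ₜ[k] (1:B)
      - m ⊗ₜ[k] (1:A) ⊗ₜ[k] b ⊗ₜ[k] α, ?_⟩
    rw [map_sub, hp2, hp2]
    simp only [map_one, mul_one, one_mul, op_smul_eq_smul, one_smul]
    abel
  map_one_eq_zero' := LinearMap.ext fun m => by
    simp only [LinearMap.coe_mk, AddHom.coe_mk, LinearMap.zero_apply, SHmk_apply]
    rw [Submodule.Quotient.mk_eq_zero]
    refine ⟨m ⊗ₜ[k] 1 ⊗ₜ[k] 1 ⊗ₜ[k] (1 : B), ?_⟩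
    rw [hp2]
    simp [op_smul_eq_smul]
  leibniz' a b := LinearMap.ext fun m => by
    simp only [LinearMap.coe_mk, AddHom.coe_mk, LinearMap.add_apply, LinearMap.smul_apply,
      SHmk_apply]
    rw [← Submodule.Quotient.mk_smul, ← Submodule.Quotient.mk_smul,
      ← Submodule.Quotient.mk_add, Submodule.Quotient.eq]
    refine ⟨-(m ⊗ₜ[k] a ⊗ₜ[k] b ⊗ₜ[k] (1 : B)), ?_⟩
    rw [map_neg, hp2]
    simp only [map_one, mul_one, op_smul_eq_smul, one_smul, smul_tmul']
    abel


variable (B) in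
noncomputable def SHg : (M ⊗[A] Ω[A⁄B]) →ₗ[A] ((M ⊗[k] A) ⧸ SHN B p2 hp2) :=
  TensorProduct.lift (SHδ B p2 hp2).liftKaehlerDifferential.flip

lemma SHg_tmul_D (m : M) (b : A) :
    SHg B p2 hp2 (m ⊗ₜ[A] KaehlerDifferential.D B A b) = SHmk B p2 hp2 (m ⊗ₜ[k] b) := by
  show (SHδ B p2 hp2).liftKaehlerDifferential (KaehlerDifferential.D B A b) m = _
  rw [Derivation.liftKaehlerDifferential_comp_D]
  rfl

variable (B) in
noncomputable def SHfbar : ((M ⊗[k] A) ⧸ SHN B p2 hp2) →ₗ[k] M ⊗[A] Ω[A⁄B] :=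
  (Submodule.liftQ ((SHN B p2 hp2).restrictScalars k) (SHf (k:=k) B (M:=M))
      (fun x hx => by obtain ⟨y, rfl⟩ := hx; exact SHf_p2 p2 hp2 y)) ∘ₗ
    ((Submodule.Quotient.restrictScalarsEquiv k (SHN B p2 hp2)).symm :
      ((M ⊗[k] A) ⧸ SHN B p2 hp2) →ₗ[k] ((M ⊗[k] A) ⧸ (SHN B p2 hp2).restrictScalars k))

lemma SHfbar_mk (x : M ⊗[k] A) :
    SHfbar B p2 hp2 (SHmk B p2 hp2 x) = SHf (k:=k) B (M:=M) x := by
  rfl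

lemma SHg_f (x : M ⊗[k] A) :
    SHg B p2 hp2 (SHf (k:=k) B (M:=M) x) = SHmk B p2 hp2 x := by
  have h : ((SHg B p2 hp2).restrictScalars k) ∘ₗ SHf (k:=k) B (M:=M)
      = (SHmk B p2 hp2).restrictScalars k := by
    apply TensorProduct.ext'
    intro m a
    simp only [LinearMap.coe_comp, Function.comp_apply, LinearMap.coe_restrictScalars]
    rw [SHf_tmul, SHg_tmul_D]
  exact LinearMap.congr_fun h x

lemma SHf_g (x : M ⊗[A] Ω[A⁄B]) :
    SHfbar B p2 hp2 (SHg B p2 hp2 x) = x := by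
  induction x using TensorProduct.induction_on with
  | zero => simp only [map_zero]
  | add x y ihx ihy => rw [map_add, map_add, ihx, ihy]
  | tmul m ω =>
    have hω : ω ∈ Submodule.span A (Set.range (KaehlerDifferential.D B A)) := by
      rw [KaehlerDifferential.span_range_derivation]; trivial
    induction hω using Submodule.span_induction generalizing m with
    | mem ω hω =>
      obtain ⟨b, rfl⟩ := hω
      rw [SHg_tmul_D, SHfbar_mk, SHf_tmul]
    | zero => simp only [tmul_zero, map_zero]
    | add x y hx hy ihx ihy => rw [tmul_add, map_add, map_add, ihx, ihy]
    | smul a x hx ih => rw [← smul_tmul]; exact ih (a • m)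

end Aux

theorem secondaryHochschild_H1_iso_kaehler
    (k : Type*) [CommRing k]
    (B : Type*) [CommRing B] [Algebra k B]
    (A : Type*) [CommRing A] [Algebra k A] [Algebra B A] [IsScalarTower k B A]
    (M : Type*) [AddCommGroup M] [Module k M]
    [Module A M] [Module Aᵐᵒᵖ M] [IsCentralScalar A M]
    [IsScalarTower k A M] [SMulCommClass A k M]
    -- the secondary Hochschild differentials ∂₁, ∂₂ of (A,B,ε) with coefficients in M
    (p1 : M ⊗[k] A →ₗ[k] M)
    (hp1 : ∀ (m : M) (a : A), p1 (m ⊗ₜ[k] a) = op a • m - a • m)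
    (p2 : M ⊗[k] A ⊗[k] A ⊗[k] B →ₗ[k] M ⊗[k] A)
    (hp2 : ∀ (m : M) (a b : A) (α : B),
      p2 (m ⊗ₜ[k] a ⊗ₜ[k] b ⊗ₜ[k] α) =
        (op (a * algebraMap B A α) • m) ⊗ₜ[k] b
        - m ⊗ₜ[k] (a * algebraMap B A α * b)
        + ((b * algebraMap B A α) • m) ⊗ₜ[k] a) :
    -- ∂₁ = 0, and H₁((A,B,ε);M) = (M⊗A)/im ∂₂ ≅ M ⊗[A] Ω¹_{A/B}
    p1 = 0 ∧
    ∃ e : ((M ⊗[k] A) ⧸ LinearMap.range p2) ≃ₗ[k] (M ⊗[A] Ω[A⁄B]),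
      (∀ (m : M) (a : A),
        e (Submodule.Quotient.mk (m ⊗ₜ[k] a)) = m ⊗ₜ[A] (KaehlerDifferential.D B A a)) ∧
      (∀ (m : M) (a b : A),
        e.symm (m ⊗ₜ[A] (a • KaehlerDifferential.D B A b))
          = Submodule.Quotient.mk ((a • m) ⊗ₜ[k] b)) := by
  refine ⟨?_, ?_⟩
  · apply TensorProduct.ext'
    intro m a
    rw [hp1, op_smul_eq_smul, sub_self, LinearMap.zero_apply]
  · haveI : SMulCommClass k A M := SMulCommClass.symm A k M
    have hN : LinearMap.range p2 = (SHN B p2 hp2).restrictScalars k :=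
      Submodule.ext fun x => Iff.rfl
    let e0 : ((M ⊗[k] A) ⧸ SHN B p2 hp2) ≃ₗ[k] (M ⊗[A] Ω[A⁄B]) :=
      LinearEquiv.ofLinear (SHfbar B p2 hp2) ((SHg B p2 hp2).restrictScalars k)
        (LinearMap.ext fun x => SHf_g p2 hp2 x)
        (LinearMap.ext fun q => by
          obtain ⟨x, rfl⟩ := Submodule.Quotient.mk_surjective _ q
          show SHg B p2 hp2 (SHfbar B p2 hp2 (SHmk B p2 hp2 x)) = SHmk B p2 hp2 x
          rw [SHfbar_mk, SHg_f])
    let e : ((M ⊗[k] A) ⧸ LinearMap.range p2) ≃ₗ[k] (M ⊗[A] Ω[A⁄B]) :=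
      (Submodule.quotEquivOfEq _ _ hN).trans
        ((Submodule.Quotient.restrictScalarsEquiv k (SHN B p2 hp2)).trans e0)
    have he : ∀ x : M ⊗[k] A,
        e (Submodule.Quotient.mk x) = SHf (k:=k) B (M:=M) x := by
      intro x
      show e0 ((Submodule.Quotient.restrictScalarsEquiv k (SHN B p2 hp2))
        ((Submodule.quotEquivOfEq _ _ hN) (Submodule.Quotient.mk x))) = _
      rw [Submodule.quotEquivOfEq_mk, Submodule.Quotient.restrictScalarsEquiv_mk]
      show SHfbar B p2 hp2 (SHmk B p2 hp2 x) = _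
      rw [SHfbar_mk]
    refine ⟨e, fun m a => ?_, fun m a b => ?_⟩
    · rw [he, SHf_tmul]
    · rw [LinearEquiv.symm_apply_eq, he, SHf_tmul, smul_tmul]
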